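/- For even K ≥ 2, define the Class-A digraph D on N = 3K/2 vertices: for each i in {1,...,K/2}, vertex K+i has arcs to vertices 2i−1 and 2i; vertices 2i−1 and 2i have arcs to each other and each has an arc to every vertex in {K+1,...,3K/2} \ {K+i}. Then D is a K-IC structure with inner vertex set {1,...,K}: between every ordered pair of distinct inner vertices there is exactly one I-path, and D has no I-cycle. -/

import Mathlib

open Finset
open scoped Classical

universe u

variable {V : Type u}

/-- `l` is a directed cycle: nonempty, distinct vertices, consecutive arcs, wrap-around arc. -/
def IsCycle (A : V → V → Prop) (l : List V) : Prop :=
  l ≠ [] ∧ l.Nodup ∧ l.Chain' A ∧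
    ∀ a b, l.getLast? = some a → l.head? = some b → A a b

/-- `l` is a directed path from `i` to `j`. -/
def IsPath (A : V → V → Prop) (l : List V) (i j : V) : Prop :=
  l.Nodup ∧ l.Chain' A ∧ l.head? = some i ∧ l.getLast? = some j

/-- An I-path w.r.t. inner vertex set `VI`: a path between two distinct inner vertices
whose interior vertices are all non-inner. -/
def IsIPath [DecidableEq V] (A : V → V → Prop) (VI : Finset V) (l : List V) (i j : V) : Prop :=
  IsPath A l i j ∧ i ∈ VI ∧ j ∈ VI ∧ i ≠ j ∧ ∀ v ∈ l.dropLast.drop 1, v ∉ VI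

/-- An I-cycle: a directed cycle containing exactly one inner vertex. -/
def IsICycle [DecidableEq V] (A : V → V → Prop) (VI : Finset V) (l : List V) : Prop :=
  IsCycle A l ∧ (l.toFinset ∩ VI).card = 1

/-- A K-IC structure: exactly one I-path between each ordered pair of distinct inner
vertices, and no I-cycle. -/
def IsKIC [DecidableEq V] (A : V → V → Prop) (VI : Finset V) : Prop :=
  (∀ i ∈ VI, ∀ j ∈ VI, i ≠ j → ∃! l : List V, IsIPath A VI l i j) ∧
  ∀ l : List V, ¬ IsICycle A VI l

/-- Out-degree of a vertex. -/
noncomputable def outDeg [Fintype V] (A : V → V → Prop) (v : V) : ℕ :=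
  (univ.filter fun w => A v w).card

/-- Minimum out-degree of a digraph. -/
noncomputable def minOutDeg [Fintype V] [Nonempty V] (A : V → V → Prop) : ℕ :=
  univ.inf' univ_nonempty (outDeg A)

/-- Out-degree of `v` within the subdigraph induced on `s`. -/
noncomputable def outDegOn (A : V → V → Prop) (s : Finset V) (v : V) : ℕ :=
  (s.filter fun w => A v w).card

/-- Minimum out-degree of the subdigraph induced on `s` (0 if `s` is empty). -/
noncomputable def minOutDegOn (A : V → V → Prop) (s : Finset V) : ℕ :=
  if h : s.Nonempty then s.inf' h (outDegOn A s) else 0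

/-- Induced arc relation on a vertex subset. -/
def inducedRel (A : V → V → Prop) (s : Finset V) : V → V → Prop :=
  fun u v => u ∈ s ∧ v ∈ s ∧ A u v

/-- A valid index code of length `p` for `t`-bit messages: the messages of every receiver
are determined by the codeword together with its side information (its out-neighbours'
messages). -/
def IsIndexCode [Fintype V] (A : V → V → Prop) (t p : ℕ)
    (F : (V → (Fin t → ZMod 2)) → (Fin p → ZMod 2)) : Prop :=
  ∀ x y : V → (Fin t → ZMod 2), F x = F y →
    ∀ i : V, (∀ q, A i q → x q = y q) → x i = y i

/-- No directed cycle lies entirely inside `s`. -/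
def AcyclicOn (A : V → V → Prop) (s : Finset V) : Prop :=
  ∀ l : List V, IsCycle A l → ¬ (∀ v ∈ l, v ∈ s)

/-- `s` (as a partial clique) is minimal: its savings `δ⁺` strictly exceed the total
savings of any partition of `s` into at least two parts. -/
def IsMinimalPC [DecidableEq V] (A : V → V → Prop) (s : Finset V) : Prop :=
  ∀ P : Finpartition s, 2 ≤ P.parts.card →
    ∑ p ∈ P.parts, minOutDegOn A p < minOutDegOn A s

/-- A directed rooted tree inside the digraph `A`, rooted at inner vertex `i`, whose
leaves are exactly the other inner vertices and whose internal vertices are non-inner. -/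
structure IsICTree [DecidableEq V] (A : V → V → Prop) (VI : Finset V) (i : V)
    (T : V → V → Prop) : Prop where
  sub : ∀ u v, T u v → A u v
  root_mem : i ∈ VI
  root_no_parent : ∀ u, ¬ T u i
  unique_parent : ∀ u u' v, T u v → T u' v → u = u'
  reach : ∀ j ∈ VI, j ≠ i → Relation.ReflTransGen T i j
  leaf : ∀ j ∈ VI, j ≠ i → ∀ w, ¬ T j w
  connected : ∀ u v, T u v → Relation.ReflTransGen T i u
  acyclic : ∀ v, ¬ Relation.TransGen T v v

/-- The Class-A digraph on `3*m` vertices (`K = 2*m` inner vertices `0,…,K-1`,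
outer vertices `K,…,3m-1`): outer vertex `K+i` has arcs to inner `2i` and `2i+1`;
inner `2i` and `2i+1` have mutual arcs and arcs to every outer vertex except `K+i`. -/
def classARel (m : ℕ) : Fin (3 * m) → Fin (3 * m) → Prop := fun u v =>
  (2 * m ≤ u.val ∧ v.val < 2 * m ∧ v.val / 2 = u.val - 2 * m) ∨
  (u.val < 2 * m ∧ v.val < 2 * m ∧ u.val / 2 = v.val / 2 ∧ u ≠ v) ∨
  (u.val < 2 * m ∧ 2 * m ≤ v.val ∧ v.val - 2 * m ≠ u.val / 2)


namespace Stmt17Aux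

variable {m : ℕ}

lemma arc_inner_inner {u v : Fin (3*m)} (hu : u.val < 2*m) (hv : v.val < 2*m)
    (h : classARel m u v) : u.val / 2 = v.val / 2 ∧ u ≠ v := by
  rcases h with ⟨h1,h2,h3⟩|⟨h1,h2,h3,h4⟩|⟨h1,h2,h3⟩
  · omega
  · exact ⟨h3, h4⟩
  · omega

lemma arc_outer {u v : Fin (3*m)} (hu : 2*m ≤ u.val)
    (h : classARel m u v) : v.val < 2*m ∧ v.val / 2 = u.val - 2*m := by
  rcases h with ⟨h1,h2,h3⟩|⟨h1,h2,h3,h4⟩|⟨h1,h2,h3⟩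
  · exact ⟨h2, h3⟩
  · omega
  · omega

lemma arc_inner_outer {u v : Fin (3*m)} (hu : u.val < 2*m) (hv : 2*m ≤ v.val)
    (h : classARel m u v) : v.val - 2*m ≠ u.val / 2 := by
  rcases h with ⟨h1,h2,h3⟩|⟨h1,h2,h3,h4⟩|⟨h1,h2,h3⟩
  · omega
  · omega
  · exact h3

lemma no_self (v : Fin (3*m)) : ¬ classARel m v v := by
  rintro (⟨h1,h2,h3⟩|⟨h1,h2,h3,h4⟩|⟨h1,h2,h3⟩)
  · omega
  · exact h4 rfl
  · omega

/-- The canonical I-path from i to j. -/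
def canon (m : ℕ) (i j : Fin (3*m)) (hj : j.val < 2*m) (hm : 1 ≤ m) : List (Fin (3*m)) :=
  if i.val / 2 = j.val / 2 then [i, j]
  else [i, ⟨2*m + j.val/2, by omega⟩, j]

lemma ipath_canon (hm : 1 ≤ m) {i j : Fin (3*m)} (hi : i.val < 2*m) (hj : j.val < 2*m)
    (hij : i ≠ j) :
    IsIPath (classARel m) ((univ : Finset (Fin (3*m))).filter fun v => v.val < 2*m)
      (canon m i j hj hm) i j := by
  have hiv : i.val ≠ j.val := fun h => hij (Fin.ext h)
  unfold canon
  split_ifs with hdiv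
  · refine ⟨⟨by simp [hij], ?_, rfl, rfl⟩, by simp [hi], by simp [hj], hij, by simp⟩
    simp only [List.Chain', List.isChain_cons_cons, List.isChain_singleton, and_true]
    exact Or.inr (Or.inl ⟨hi, hj, hdiv, hij⟩)
  · set w : Fin (3*m) := ⟨2*m + j.val/2, by omega⟩ with hw
    have hiw : i ≠ w := by intro h; apply absurd (congrArg Fin.val h); simp [hw]; omega
    have hwj : w ≠ j := by intro h; apply absurd (congrArg Fin.val h); simp [hw]; omega
    refine ⟨⟨by simp [hij, hiw, hwj], ?_, rfl, rfl⟩, by simp [hi], by simp [hj], hij, ?_⟩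
    · simp only [List.Chain', List.isChain_cons_cons, List.isChain_singleton, and_true]
      constructor
      · exact Or.inr (Or.inr ⟨hi, by simp [hw], by simp [hw]; omega⟩)
      · exact Or.inl ⟨by simp [hw], hj, by simp [hw]⟩
    · intro v hv
      simp only [List.dropLast, List.drop, List.mem_singleton] at hv
      subst hv
      simp [hw]

lemma ipath_eq (hm : 1 ≤ m) {i j : Fin (3*m)} (hj : j.val < 2*m) {l : List (Fin (3*m))}
    (h : IsIPath (classARel m) ((univ : Finset (Fin (3*m))).filter fun v => v.val < 2*m) l i j) :
    l = canon m i j hj hm := by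
  obtain ⟨⟨hnd, hch, hhd, hlast⟩, hiI, hjI, hij, hint⟩ := h
  simp only [mem_filter, mem_univ, true_and] at hiI hjI
  unfold canon
  rcases l with _ | ⟨a, _ | ⟨b, _ | ⟨c, _ | ⟨d, t⟩⟩⟩⟩
  · simp at hhd
  · simp at hhd hlast
    subst hhd; subst hlast
    exact absurd rfl hij
  · simp at hhd hlast
    subst hhd; subst hlast
    rw [List.Chain', List.isChain_cons_cons] at hch
    have := arc_inner_inner hiI hjI hch.1
    rw [if_pos this.1]
  · simp at hhd hlast
    subst hhd; subst hlast
    have hb : b.val ≥ 2*m := by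
      have := hint b (by simp)
      simp at this
      omega
    rw [List.Chain', List.isChain_cons_cons, List.isChain_cons_cons] at hch
    obtain ⟨hib, hbj, -⟩ := hch
    have h1 := arc_outer hb hbj
    have h2 := arc_inner_outer hiI hb hib
    rw [if_neg (by omega)]
    have hbval : b = (⟨2*m + c.val/2, by omega⟩ : Fin (3*m)) := by
      apply Fin.ext; simp; omega
    rw [hbval]
  · exfalso
    have hb : b ∈ (a :: b :: c :: d :: t).dropLast.drop 1 := by
      rw [List.dropLast_cons₂, List.dropLast_cons₂]
      simp
    have hc : c ∈ (a :: b :: c :: d :: t).dropLast.drop 1 := by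
      rw [List.dropLast_cons₂, List.dropLast_cons₂, List.dropLast_cons₂]
      simp
    have hb' := hint b hb
    have hc' := hint c hc
    simp at hb' hc'
    rw [List.Chain', List.isChain_cons_cons, List.isChain_cons_cons] at hch
    exact absurd (arc_outer (by omega) hch.2.1).1 (by omega)

lemma no_icycle (hm : 1 ≤ m) (l : List (Fin (3*m))) :
    ¬ IsICycle (classARel m) ((univ : Finset (Fin (3*m))).filter fun v => v.val < 2*m) l := by
  rintro ⟨⟨hne, hnd, hch, hwrap⟩, hcard⟩
  have huniq : ∀ x ∈ l, ∀ y ∈ l, x.val < 2*m → y.val < 2*m → x = y := by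
    intro x hx y hy hx' hy'
    have h1 : x ∈ l.toFinset ∩ ((univ : Finset (Fin (3*m))).filter fun v => v.val < 2*m) := by
      simp [hx, hx']
    have h2 : y ∈ l.toFinset ∩ ((univ : Finset (Fin (3*m))).filter fun v => v.val < 2*m) := by
      simp [hy, hy']
    exact Finset.card_le_one.mp (le_of_eq hcard) x h1 y h2
  rcases l with _ | ⟨a, _ | ⟨b, _ | ⟨c, t⟩⟩⟩
  · exact hne rfl
  · exact no_self a (hwrap a a rfl rfl)
  · rw [List.Chain', List.isChain_cons_cons] at hch
    replace hch := hch.1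
    have hwr : classARel m b a := hwrap b a rfl rfl
    by_cases ha : a.val < 2*m
    · by_cases hb : b.val < 2*m
      · have := huniq a (by simp) b (by simp) ha hb
        simp [this] at hnd
      · exact arc_inner_outer ha (by omega) hch ((arc_outer (by omega) hwr).2.symm)
    · have := arc_outer (by omega) hch
      exact arc_inner_outer this.1 (by omega) hwr (by omega)
  · rw [List.Chain', List.isChain_cons_cons, List.isChain_cons_cons] at hch
    obtain ⟨hab, hbc, _⟩ := hch
    by_cases ha : a.val < 2*m
    · -- b and c must be outer (else equal to a, contradicting nodup)
      have hb : ¬ b.val < 2*m := by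
        intro hb
        have := huniq a (by simp) b (by simp) ha hb
        simp [this] at hnd
      have hc : ¬ c.val < 2*m := by
        intro hc
        have := huniq a (by simp) c (by simp) ha hc
        simp [this] at hnd
      exact hc (arc_outer (by omega) hbc).1
    · -- a outer, so b is inner; last element is outer, wrap arc forces a inner
      have hb : b.val < 2*m := (arc_outer (by omega) hab).1
      set x := (c :: t).getLast (List.cons_ne_nil c t) with hxdef
      have hxmem : x ∈ c :: t := List.getLast_mem _
      have hxlast : (a :: b :: c :: t).getLast? = some x := by
        rw [List.getLast?_cons_cons, List.getLast?_cons_cons,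
          List.getLast?_eq_getLast (List.cons_ne_nil c t)]
      have hwr : classARel m x a := hwrap x a hxlast rfl
      have hx : ¬ x.val < 2*m := by
        intro hx'
        have hbn : b ∉ c :: t := by
          rw [List.nodup_cons, List.nodup_cons] at hnd
          exact hnd.2.1
        have : x = b := huniq x (by rcases List.mem_cons.mp hxmem with h | h <;> simp [h]) b (by simp) hx' hb
        exact hbn (this ▸ hxmem)
      exact ha (arc_outer (by omega) hwr).1
  
end Stmt17Aux

/-- The Class-A digraph on N = 3K/2 vertices (K = 2m even, K ≥ 2) is a K-IC structure
with inner vertex set the K vertices {0,…,K−1}. -/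
theorem stmt17 (K m : ℕ) (hm : K = 2 * m) (hK : 2 ≤ K) :
    ((univ : Finset (Fin (3 * m))).filter fun v => v.val < K).card = K ∧
    IsKIC (classARel m)
      ((univ : Finset (Fin (3 * m))).filter fun v => v.val < K) := by
  subst hm
  have hm1 : 1 ≤ m := by omega
  constructor
  · apply Finset.card_eq_of_bijective (fun i h => (⟨i, by omega⟩ : Fin (3*m)))
    · intro a ha
      simp only [mem_filter, mem_univ, true_and] at ha
      exact ⟨a.val, ha, Fin.ext rfl⟩
    · intro i h
      simp [h]
    · intro i j hi hj h
      simpa using congrArg Fin.val h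
  · constructor
    · intro i hi j hj hij
      simp only [mem_filter, mem_univ, true_and] at hi hj
      exact ⟨Stmt17Aux.canon m i j hj hm1, Stmt17Aux.ipath_canon hm1 hi hj hij,
        fun l hl => Stmt17Aux.ipath_eq hm1 hj hl⟩
    · exact Stmt17Aux.no_icycle hm1
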